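/- Maximum principle lower bound: Let N ≥ 1, T > 0, and let u: {0,1} × {0,…,N} × [0,T] → ℝ, written u_n(i,t), be a C¹-in-time solution of the system -du_n/dt = γ⁺_n(i,t)(u_{n+1} - u_n) + γ⁻_n(i,t)(u_{n-1} - u_n) + h(ū_n - u_n, n/N, i), where ū_n(i,t) = u_n(1-i,t), the coefficients satisfy γ⁺_n, γ⁻_n ≥ 0 with γ⁻_0 = 0 and γ⁺_N = 0, and h(p,θ,i) is monotone increasing in p. Let M = max over (i,θ) ∈ {0,1}×[0,1] of |h(0,θ,i)|. Then for all (i,n,t), u_n(i,t) ≥ -max_{m,j}|u_m(j,T)| - 2M(T-t). -/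

import Mathlib

open Set Filter Topology

/-- Maximum principle lower bound for the Hamilton-Jacobi ODE system
of the N+1 player game: `u_n(i,t) ≥ -max|u(T)| - 2M(T-t)`. -/
theorem maximum_principle_lower_bound (N : ℕ) (hN : 1 ≤ N) (T : ℝ) (hT : 0 < T)
    (u : Fin 2 → ℕ → ℝ → ℝ) (γp γm : Fin 2 → ℕ → ℝ → ℝ)
    (h : ℝ → ℝ → Fin 2 → ℝ) (M UT : ℝ)
    (hγp : ∀ i n t, 0 ≤ γp i n t) (hγm : ∀ i n t, 0 ≤ γm i n t)
    (hb0 : ∀ i t, γm i 0 t = 0) (hbN : ∀ i t, γp i N t = 0)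
    (hmono : ∀ θ i, Monotone fun p => h p θ i)
    (hM : ∀ θ ∈ Icc (0:ℝ) 1, ∀ i, |h 0 θ i| ≤ M)
    (hUT : ∀ j m, m ≤ N → |u j m T| ≤ UT)
    (hode : ∀ i n, n ≤ N → ∀ t ∈ Icc 0 T,
      HasDerivAt (u i n)
        (-(γp i n t * (u i (n+1) t - u i n t) + γm i n t * (u i (n-1) t - u i n t)
          + h (u (1-i) n t - u i n t) ((n : ℝ) / N) i)) t) :
    ∀ i n, n ≤ N → ∀ t ∈ Icc 0 T, -UT - 2 * M * (T - t) ≤ u i n t := by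
  have hM0 : 0 ≤ M := le_trans (abs_nonneg _) (hM 0 ⟨le_refl 0, zero_le_one⟩ 0)
  have hNpos : (0:ℝ) < N := by exact_mod_cast Nat.lt_of_lt_of_le Nat.zero_lt_one hN
  -- the key ε-perturbed claim
  have key : ∀ ε : ℝ, 0 < ε → ∀ t ∈ Icc (0:ℝ) T, ∀ i : Fin 2, ∀ n, n ≤ N →
      0 ≤ u i n t + UT + (2*M+ε)*(T-t) := by
    intro ε hε
    set c : ℝ := 2*M + ε with hc
    have hc0 : 0 < c := by positivity
    set P : ℝ → Prop := fun s => ∀ i : Fin 2, ∀ n, n ≤ N → 0 ≤ u i n s + UT + c*(T-s)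
      with hPdef
    set B : Set ℝ := {t | t ∈ Icc (0:ℝ) T ∧ ∀ s ∈ Icc t T, P s} with hBdef
    have hPT : P T := by
      intro i n hn
      have h1 : -UT ≤ u i n T := neg_le_of_abs_le (hUT i n hn)
      have h2 : T - T = 0 := by ring
      rw [h2, mul_zero]
      linarith
    have hTB : T ∈ B := by
      refine ⟨⟨hT.le, le_rfl⟩, fun s hs => ?_⟩
      have : s = T := le_antisymm hs.2 hs.1
      rw [this]; exact hPT
    have hBne : B.Nonempty := ⟨T, hTB⟩
    have hBdd : BddBelow B := ⟨0, fun x hx => hx.1.1⟩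
    set t₀ : ℝ := sInf B with ht₀def
    have ht00 : 0 ≤ t₀ := le_csInf hBne (fun x hx => hx.1.1)
    have ht0T : t₀ ≤ T := csInf_le hBdd hTB
    have ht0mem : t₀ ∈ Icc (0:ℝ) T := ⟨ht00, ht0T⟩
    have Pgt : ∀ s, t₀ < s → s ≤ T → P s := by
      intro s hlt hsT
      obtain ⟨b, hbB, hbs⟩ := exists_lt_of_csInf_lt hBne hlt
      exact hbB.2 s ⟨hbs.le, hsT⟩
    have Pstar : ∀ s ∈ Icc t₀ T, P s := by
      intro s hs
      rcases eq_or_lt_of_le hs.1 with heq | hlt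
      · rw [← heq]
        rcases eq_or_lt_of_le ht0T with hTeq | hTlt
        · rw [hTeq]; exact hPT
        · intro i n hn
          have hct : ContinuousAt (fun s => u i n s + UT + c*(T-s)) t₀ :=
            (((hode i n hn t₀ ht0mem).continuousAt).add continuousAt_const).add
              (continuousAt_const.mul (continuousAt_const.sub continuousAt_id))
          refine ge_of_tendsto (hct.tendsto.mono_left nhdsWithin_le_nhds :
            Tendsto _ (𝓝[>] t₀) _) ?_
          filter_upwards [Ioo_mem_nhdsGT_of_mem (left_mem_Ico.mpr hTlt)] with x hx
          exact Pgt x hx.1 hx.2.le i n hn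
      · exact Pgt s hlt hs.2
    have Pt0 : P t₀ := Pstar t₀ ⟨le_rfl, ht0T⟩
    -- show t₀ = 0
    have ht0zero : t₀ ≤ 0 := by
      by_contra hpos
      push_neg at hpos
      -- P holds eventually to the left of t₀
      have hev : ∀ᶠ s in 𝓝[<] t₀, P s := by
        have hall : ∀ᶠ s in 𝓝[<] t₀, ∀ p : Fin 2 × Fin (N+1),
            0 ≤ u p.1 (p.2 : ℕ) s + UT + c*(T-s) := by
          rw [eventually_all]
          rintro ⟨i, n⟩
          have hn : (n : ℕ) ≤ N := Nat.lt_succ_iff.mp n.isLt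
          set f : ℝ → ℝ := fun s => u i (n : ℕ) s + UT + c*(T-s) with hfdef
          have hft : 0 ≤ f t₀ := Pt0 i n hn
          rcases hft.lt_or_eq with hpos' | heq0
          · have hcf : ContinuousAt f t₀ :=
              (((hode i n hn t₀ ht0mem).continuousAt).add continuousAt_const).add
                (continuousAt_const.mul (continuousAt_const.sub continuousAt_id))
            have := (hcf.tendsto.eventually_const_lt hpos').mono (fun x hx => hx.le)
            exact this.filter_mono nhdsWithin_le_nhds
          · -- equality case: use the ODE
            have hder := hode i n hn t₀ ht0mem
            set D : ℝ := -(γp i n t₀ * (u i (n+1) t₀ - u i n t₀)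
              + γm i n t₀ * (u i (n-1) t₀ - u i n t₀)
              + h (u (1-i) n t₀ - u i n t₀) ((n : ℝ) / N) i) with hDdef
            have hgd : HasDerivAt f (D + c * (0 - 1)) t₀ := by
              have h1 : HasDerivAt (fun s : ℝ => T - s) (0 - 1) t₀ :=
                (hasDerivAt_const t₀ T).sub (hasDerivAt_id t₀)
              exact ((hder.add_const UT).add (h1.const_mul c))
            have humin : ∀ (j : Fin 2) (m : ℕ), m ≤ N → u i n t₀ ≤ u j m t₀ := by
              intro j m hm
              have h1 := Pt0 j m hm
              have h2 : u i (n:ℕ) t₀ + UT + c*(T-t₀) = 0 := heq0.symm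
              linarith
            have hθ : (n:ℝ)/N ∈ Icc (0:ℝ) 1 := by
              constructor
              · exact div_nonneg (Nat.cast_nonneg _) (Nat.cast_nonneg _)
              · rw [div_le_one hNpos]; exact_mod_cast hn
            have hh : -M ≤ h (u (1-i) n t₀ - u i n t₀) ((n : ℝ) / N) i := by
              have h1 := neg_le_of_abs_le (hM _ hθ i)
              have h2 := hmono ((n:ℝ)/N) i
                (show (0:ℝ) ≤ u (1-i) n t₀ - u i n t₀ from
                  sub_nonneg.mpr (humin (1-i) n hn))
              simp only at h2
              linarith
            have hpterm : 0 ≤ γp i n t₀ * (u i (n+1) t₀ - u i n t₀) := by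
              rcases eq_or_lt_of_le hn with hEq | hlt
              · rw [hEq, hbN i t₀, zero_mul]
              · exact mul_nonneg (hγp i n t₀) (sub_nonneg.mpr (humin i (n+1) hlt))
            have hmterm : 0 ≤ γm i n t₀ * (u i (n-1) t₀ - u i n t₀) :=
              mul_nonneg (hγm i n t₀)
                (sub_nonneg.mpr (humin i (n-1) (le_trans (Nat.sub_le n 1) hn)))
            have hcneg : D + c * (0 - 1) < 0 := by
              rw [hDdef, hc]
              nlinarith [hpterm, hmterm, hh, hM0, hε]
            have hslope : Tendsto (slope f t₀) (𝓝[<] t₀) (𝓝 (D + c * (0 - 1))) :=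
              (hasDerivAt_iff_tendsto_slope.mp hgd).mono_left
                (nhdsWithin_mono _ (fun x hx => ne_of_lt hx))
            have hev1 : ∀ᶠ s in 𝓝[<] t₀, slope f t₀ s < 0 :=
              hslope.eventually_lt_const hcneg
            filter_upwards [hev1, self_mem_nhdsWithin] with s h1 h2
            have hlt' : s - t₀ < 0 := sub_neg.mpr h2
            rw [slope_def_field] at h1
            have hnum : 0 < f s - f t₀ := by
              rcases div_neg_iff.mp h1 with ⟨ha, _⟩ | ⟨_, hb⟩
              · exact ha
              · linarith
            have hft0 : f t₀ = 0 := heq0.symm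
            show 0 ≤ f s
            linarith
        refine hall.mono fun s hs => ?_
        intro i n hn
        exact hs (i, ⟨n, Nat.lt_succ_of_le hn⟩)
      -- extract an interval and contradict the infimum
      obtain ⟨l, hl, hsub⟩ := mem_nhdsLT_iff_exists_Ioo_subset.mp hev
      set s₀ : ℝ := max l 0 with hs₀def
      have hs₀lt : s₀ < t₀ := max_lt hl hpos
      set s₁ : ℝ := (s₀ + t₀)/2 with hs₁def
      have hs₁pos : 0 < s₁ := by
        have : (0:ℝ) ≤ s₀ := le_max_right l 0
        rw [hs₁def]; linarith
      have hs₁lt : s₁ < t₀ := by rw [hs₁def]; linarith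
      have hs₀s₁ : s₀ < s₁ := by rw [hs₁def]; linarith
      have hls₁ : l < s₁ := lt_of_le_of_lt (le_max_left l 0) hs₀s₁
      have hs₁B : s₁ ∈ B := by
        refine ⟨⟨hs₁pos.le, le_trans hs₁lt.le ht0T⟩, fun s hs => ?_⟩
        rcases lt_or_ge s t₀ with hcase | hcase
        · exact hsub ⟨lt_of_lt_of_le hls₁ hs.1, hcase⟩
        · exact Pstar s ⟨hcase, hs.2⟩
      have := csInf_le hBdd hs₁B
      rw [← ht₀def] at this
      linarith
    intro t ht i n hn
    have : t ∈ Icc t₀ T := ⟨le_trans ht0zero ht.1, ht.2⟩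
    exact Pstar t this i n hn
  -- conclude by letting ε → 0
  intro i n hn t ht
  have hmain : ∀ ε : ℝ, 0 < ε → -UT - 2 * M * (T - t) ≤ u i n t + ε := by
    intro ε hε
    have hk := key (ε/T) (div_pos hε hT) t ht i n hn
    have h1 : (ε/T) * (T - t) ≤ (ε/T) * T :=
      mul_le_mul_of_nonneg_left (by linarith [ht.1]) (div_pos hε hT).le
    have h2 : (ε/T) * T = ε := div_mul_cancel₀ ε hT.ne'
    nlinarith
  exact le_of_forall_pos_le_add hmain
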